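/- Let m > n ≥ 1 and A(f) = ⟨f, zⁿ⟩ z^m on H²(𝔻). Then Ber(A) = {(r^{m+n} - r^{m+n+2}) e^{iθ(m-n)} : 0 ≤ r < 1, θ ∈ ℝ} is the closed disc centered at the origin of radius (2/(m+n+2)) · ((m+n)/(m+n+2))^{(m+n)/2}; in particular Ber(A) is convex. -/

import Mathlib

open Complex

private lemma gm_aux (K : ℝ) (hK : 0 < K) (t : ℝ) (ht0 : 0 ≤ t) (ht1 : t ≤ 1) :
    t ^ (K / 2) * (1 - t) ≤ (K / (K + 2)) ^ (K / 2) * (2 / (K + 2)) := by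
  have hK2 : (0:ℝ) < K + 2 := by linarith
  set w₁ : ℝ := K / (K + 2) with hw₁def
  set w₂ : ℝ := 2 / (K + 2) with hw₂def
  have hw₁ : 0 < w₁ := by positivity
  have hw₂ : 0 < w₂ := by positivity
  have hsum : w₁ + w₂ = 1 := by rw [hw₁def, hw₂def]; field_simp
  have h1t : (0:ℝ) ≤ 1 - t := by linarith
  have hgm := Real.geom_mean_le_arith_mean2_weighted hw₁.le hw₂.le
      (by positivity : (0:ℝ) ≤ t / w₁) (by positivity : (0:ℝ) ≤ (1 - t) / w₂) hsum
  have harith : w₁ * (t / w₁) + w₂ * ((1 - t) / w₂) = 1 := by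
    field_simp; ring
  rw [harith] at hgm
  have hp : ((t / w₁) ^ w₁ * ((1 - t) / w₂) ^ w₂) ^ ((K + 2) / 2) ≤ 1 :=
    Real.rpow_le_one (by positivity) hgm (by positivity)
  have hexp : ((t / w₁) ^ w₁ * ((1 - t) / w₂) ^ w₂) ^ ((K + 2) / 2)
      = (t / w₁) ^ (K / 2) * ((1 - t) / w₂) := by
    rw [Real.mul_rpow (by positivity) (by positivity),
        ← Real.rpow_mul (by positivity), ← Real.rpow_mul (by positivity)]
    have e1 : w₁ * ((K + 2) / 2) = K / 2 := by rw [hw₁def]; field_simp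
    have e2 : w₂ * ((K + 2) / 2) = 1 := by rw [hw₂def]; field_simp
    rw [e1, e2, Real.rpow_one]
  rw [hexp] at hp
  have hdiv : (t / w₁) ^ (K / 2) = t ^ (K / 2) / w₁ ^ (K / 2) :=
    Real.div_rpow ht0 hw₁.le _
  rw [hdiv] at hp
  have hw₁pow : 0 < w₁ ^ (K / 2) := Real.rpow_pos_of_pos hw₁ _
  calc t ^ (K / 2) * (1 - t)
      = (t ^ (K / 2) / w₁ ^ (K / 2) * ((1 - t) / w₂)) * (w₁ ^ (K / 2) * w₂) := by
        field_simp
    _ ≤ 1 * (w₁ ^ (K / 2) * w₂) :=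
        mul_le_mul_of_nonneg_right hp (by positivity)
    _ = w₁ ^ (K / 2) * w₂ := one_mul _

theorem berezin_range_rank_one_zn_zm_hardy (m n : ℕ) (hn : 1 ≤ n) (hmn : n < m) :
    {z : ℂ | ∃ r θ : ℝ, 0 ≤ r ∧ r < 1 ∧
        z = ((r ^ (m + n) - r ^ (m + n + 2) : ℝ) : ℂ) *
          Complex.exp ((θ * ((m : ℝ) - n) : ℝ) * Complex.I)} =
      Metric.closedBall (0 : ℂ)
        ((2 / ((m : ℝ) + n + 2)) *
          (((m : ℝ) + n) / ((m : ℝ) + n + 2)) ^ (((m : ℝ) + n) / 2)) ∧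
    Convex ℝ {z : ℂ | ∃ r θ : ℝ, 0 ≤ r ∧ r < 1 ∧
        z = ((r ^ (m + n) - r ^ (m + n + 2) : ℝ) : ℂ) *
          Complex.exp ((θ * ((m : ℝ) - n) : ℝ) * Complex.I)} := by
  set k : ℕ := m + n with hk
  have hk1 : 1 ≤ k := by omega
  have hKpos : (0:ℝ) < (k:ℝ) := by positivity
  have hK2 : (0:ℝ) < (k:ℝ) + 2 := by linarith
  have hcast : ((m:ℝ) + n) = (k:ℝ) := by rw [hk]; push_cast; ring
  set R : ℝ := (2 / ((k:ℝ) + 2)) * ((k:ℝ) / ((k:ℝ) + 2)) ^ ((k:ℝ) / 2) with hR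
  have hRpos : 0 < R := by positivity
  -- key rewriting of powers
  have hpow : ∀ r : ℝ, 0 ≤ r →
      r ^ k - r ^ (k + 2) = (r ^ 2) ^ ((k:ℝ) / 2) * (1 - r ^ 2) := by
    intro r hr
    have h1 : (r ^ 2) ^ ((k:ℝ) / 2) = r ^ k := by
      rw [← Real.rpow_natCast r 2, ← Real.rpow_mul hr, ← Real.rpow_natCast r k,
        show ((2:ℕ):ℝ) * ((k:ℝ) / 2) = (k:ℝ) by push_cast; ring]
    rw [h1, mul_sub, mul_one, ← pow_add]
  -- upper bound
  have hub : ∀ r : ℝ, 0 ≤ r → r < 1 → r ^ k - r ^ (k + 2) ≤ R ∧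
      0 ≤ r ^ k - r ^ (k + 2) := by
    intro r hr0 hr1
    have ht0 : (0:ℝ) ≤ r ^ 2 := by positivity
    have ht1 : r ^ 2 ≤ 1 := by nlinarith
    constructor
    · rw [hpow r hr0, hR, mul_comm (2 / ((k:ℝ) + 2))]
      exact gm_aux (k:ℝ) hKpos (r ^ 2) ht0 ht1
    · have := pow_le_pow_of_le_one hr0 hr1.le (by omega : k ≤ k + 2)
      linarith
  -- the maximizer
  set r0 : ℝ := Real.sqrt ((k:ℝ) / ((k:ℝ) + 2)) with hr0def
  have hr0nonneg : 0 ≤ r0 := Real.sqrt_nonneg _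
  have hr0sq : r0 ^ 2 = (k:ℝ) / ((k:ℝ) + 2) := Real.sq_sqrt (by positivity)
  have hr0sq_lt : r0 ^ 2 < 1 := by
    rw [hr0sq, div_lt_one hK2]; linarith
  have hr0lt1 : r0 < 1 := by nlinarith
  have hfr0 : r0 ^ k - r0 ^ (k + 2) = R := by
    rw [hpow r0 hr0nonneg, hr0sq, hR]
    have : 1 - (k:ℝ) / ((k:ℝ) + 2) = 2 / ((k:ℝ) + 2) := by field_simp; ring
    rw [this]; ring
  -- surjectivity onto [0, R] by IVT
  have hsurj : ∀ s : ℝ, 0 ≤ s → s ≤ R →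
      ∃ r : ℝ, 0 ≤ r ∧ r < 1 ∧ r ^ k - r ^ (k + 2) = s := by
    intro s hs0 hsR
    have hcont : ContinuousOn (fun r : ℝ => r ^ k - r ^ (k + 2)) (Set.Icc 0 r0) :=
      (continuous_pow k |>.sub (continuous_pow (k + 2))).continuousOn
    have hivt := intermediate_value_Icc hr0nonneg hcont
    have hf0 : (0:ℝ) ^ k - (0:ℝ) ^ (k + 2) = 0 := by
      rw [zero_pow (by omega), zero_pow (by omega)]; ring
    have hmem : s ∈ Set.Icc ((fun r : ℝ => r ^ k - r ^ (k + 2)) 0)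
        ((fun r : ℝ => r ^ k - r ^ (k + 2)) r0) := by
      simp only [hf0, hfr0]
      exact ⟨hs0, hsR⟩
    obtain ⟨r, hrmem, hrval⟩ := hivt hmem
    exact ⟨r, hrmem.1, lt_of_le_of_lt hrmem.2 hr0lt1, hrval⟩
  -- set equality
  have hset : {z : ℂ | ∃ r θ : ℝ, 0 ≤ r ∧ r < 1 ∧
        z = ((r ^ (m + n) - r ^ (m + n + 2) : ℝ) : ℂ) *
          Complex.exp ((θ * ((m : ℝ) - n) : ℝ) * Complex.I)} =
      Metric.closedBall (0 : ℂ)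
        ((2 / ((m : ℝ) + n + 2)) *
          (((m : ℝ) + n) / ((m : ℝ) + n + 2)) ^ (((m : ℝ) + n) / 2)) := by
    have hRad : (2 / ((m : ℝ) + n + 2)) *
        (((m : ℝ) + n) / ((m : ℝ) + n + 2)) ^ (((m : ℝ) + n) / 2) = R := by
      rw [hR, hcast]
    rw [hRad]
    ext z
    simp only [Set.mem_setOf_eq, Metric.mem_closedBall, dist_zero_right]
    constructor
    · rintro ⟨r, θ, hr0, hr1, rfl⟩
      rw [norm_mul, Complex.norm_exp_ofReal_mul_I, mul_one, Complex.norm_real, Real.norm_eq_abs]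
      rw [_root_.abs_of_nonneg (hub r hr0 hr1).2]
      exact (hub r hr0 hr1).1
    · intro hz
      obtain ⟨r, hr0, hr1, hrval⟩ := hsurj ‖z‖ (norm_nonneg z) hz
      have hmn' : ((m:ℝ) - n) ≠ 0 := by
        have : (n:ℝ) < m := Nat.cast_lt.mpr hmn
        linarith
      refine ⟨r, z.arg / ((m:ℝ) - n), hr0, hr1, ?_⟩
      rw [div_mul_cancel₀ _ hmn', show m + n = k from rfl, hrval]
      exact (Complex.norm_mul_exp_arg_mul_I z).symm
  exact ⟨hset, hset ▸ convex_closedBall _ _⟩
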